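/- arXiv:2509.17787 — 4 statements merged into one kernel-verified Lean document; each statement's English description precedes it below -/
import Mathlib

section
/- For X strictly lower-triangular with φ_Δ(X) = X one has φ_Δ(exp(X)) = exp(X), i.e., exp maps NT^{Δ+} into ST^Δ; and for φ_Δ(X) = -X one has φ_Δ(exp(X)) = exp(X)⁻¹, i.e., exp maps NT^{Δ-} into OT^Δ. Conversely, every element of ST^Δ (resp. OT^Δ) is exp(X) for a unique X ∈ NT^{Δ+} (resp. NT^{Δ-}). -/
open Matrix

def StrictLT {n : ℕ} {K : Type*} [Field K] (X : Matrix (Fin n) (Fin n) K) : Prop :=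
  ∀ i j : Fin n, i ≤ j → X i j = 0

def UnipLT {n : ℕ} {K : Type*} [Field K] (M : Matrix (Fin n) (Fin n) K) : Prop :=
  (∀ i, M i i = 1) ∧ ∀ i j : Fin n, i < j → M i j = 0

noncomputable def phiD {n : ℕ} {K : Type*} [Field K]
    (Δ M : Matrix (Fin n) (Fin n) K) : Matrix (Fin n) (Fin n) K :=
  Δ * Mᵀ * Δ⁻¹

noncomputable def matexp {n : ℕ} {K : Type*} [Field K]
    (X : Matrix (Fin n) (Fin n) K) : Matrix (Fin n) (Fin n) K :=
  ∑ k ∈ Finset.range n, ((Nat.factorial k : K))⁻¹ • X ^ k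

namespace MatexpAux

variable {n : ℕ} {K : Type*} [Field K]

/-- `Sk m A` : A vanishes on and above the m-th subdiagonal start, i.e. `A i j = 0` unless `i ≥ j + m`. -/
def Sk (m : ℕ) (A : Matrix (Fin n) (Fin n) K) : Prop :=
  ∀ i j : Fin n, (i : ℕ) < (j : ℕ) + m → A i j = 0

lemma Sk.mono {a b : ℕ} (h : a ≤ b) {A : Matrix (Fin n) (Fin n) K} (hA : Sk b A) : Sk a A :=
  fun i j hij => hA i j (by omega)

lemma Sk.zero (m : ℕ) : Sk m (0 : Matrix (Fin n) (Fin n) K) := fun _ _ _ => rfl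

lemma Sk.add {m : ℕ} {A B : Matrix (Fin n) (Fin n) K} (hA : Sk m A) (hB : Sk m B) :
    Sk m (A + B) := by
  intro i j h; simp [Matrix.add_apply, hA i j h, hB i j h]

lemma Sk.neg {m : ℕ} {A : Matrix (Fin n) (Fin n) K} (hA : Sk m A) : Sk m (-A) := by
  intro i j h; simp [Matrix.neg_apply, hA i j h]

lemma Sk.sub {m : ℕ} {A B : Matrix (Fin n) (Fin n) K} (hA : Sk m A) (hB : Sk m B) :
    Sk m (A - B) := by
  intro i j h; simp [Matrix.sub_apply, hA i j h, hB i j h]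

lemma Sk.smul {m : ℕ} (c : K) {A : Matrix (Fin n) (Fin n) K} (hA : Sk m A) : Sk m (c • A) := by
  intro i j h; simp [Matrix.smul_apply, hA i j h]

lemma Sk.mul {a b : ℕ} {A B : Matrix (Fin n) (Fin n) K} (hA : Sk a A) (hB : Sk b B) :
    Sk (a + b) (A * B) := by
  intro i j h
  rw [Matrix.mul_apply]
  apply Finset.sum_eq_zero
  intro l _
  by_cases hl : (i : ℕ) < (l : ℕ) + a
  · rw [hA i l hl, zero_mul]
  · rw [hB l j (by omega), mul_zero]

lemma Sk.pow {X : Matrix (Fin n) (Fin n) K} (hX : Sk 1 X) : ∀ k, Sk k (X ^ k)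
  | 0 => by
      intro i j h
      rw [pow_zero]
      exact Matrix.one_apply_ne (by intro he; rw [he] at h; omega)
  | k + 1 => by
      rw [pow_succ]
      exact (Sk.pow hX k).mul hX

lemma Sk.sum {m : ℕ} {ι : Type*} {s : Finset ι} {f : ι → Matrix (Fin n) (Fin n) K}
    (h : ∀ k ∈ s, Sk m (f k)) : Sk m (∑ k ∈ s, f k) := by
  intro i j hij
  rw [Matrix.sum_apply]
  exact Finset.sum_eq_zero fun k hk => h k hk i j hij

lemma Sk.eq_zero {A : Matrix (Fin n) (Fin n) K} (h : Sk n A) : A = 0 := by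
  ext i j
  exact h i j (by omega)

lemma pow_eq_zero_of_le {X : Matrix (Fin n) (Fin n) K} (hX : Sk 1 X) {k : ℕ} (hk : n ≤ k) :
    X ^ k = 0 := by
  have h0 : X ^ n = 0 := (Sk.pow hX n).eq_zero
  calc X ^ k = X ^ n * X ^ (k - n) := by rw [← pow_add]; congr 1; omega
  _ = 0 := by rw [h0, zero_mul]

lemma matexp_eq {X : Matrix (Fin n) (Fin n) K} (hX : Sk 1 X) {N : ℕ} (hN : n ≤ N) :
    matexp X = ∑ k ∈ Finset.range N, ((Nat.factorial k : K))⁻¹ • X ^ k := by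
  rw [matexp]
  apply Finset.sum_subset (Finset.range_subset_range.2 hN)
  intro k _ hk
  rw [pow_eq_zero_of_le hX (by simpa using hk), smul_zero]

lemma pow_sub_pow {X Y : Matrix (Fin n) (Fin n) K} {m : ℕ} (hX : Sk 1 X) (hY : Sk 1 Y)
    (hXY : Sk m (X - Y)) : ∀ j, Sk (m + j) (X ^ (j + 1) - Y ^ (j + 1))
  | 0 => by simpa using hXY
  | j + 1 => by
      have h1 : X ^ (j + 2) - Y ^ (j + 2)
          = X * (X ^ (j + 1) - Y ^ (j + 1)) + (X - Y) * Y ^ (j + 1) := by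
        rw [mul_sub, sub_mul, sub_add_sub_cancel, ← pow_succ', ← pow_succ']
      rw [h1]
      have h2 := hX.mul (pow_sub_pow hX hY hXY j)
      rw [show 1 + (m + j) = m + (j + 1) by omega] at h2
      have h3 := hXY.mul (Sk.pow hY (j + 1))
      exact h2.add h3

lemma matexp_sub_matexp {X Y : Matrix (Fin n) (Fin n) K} {m : ℕ} (hX : Sk 1 X) (hY : Sk 1 Y)
    (hXY : Sk m (X - Y)) : Sk (m + 1) (matexp X - matexp Y - (X - Y)) := by
  rw [matexp_eq hX (Nat.le_add_right n 2), matexp_eq hY (Nat.le_add_right n 2),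
    ← Finset.sum_sub_distrib]
  simp only [← smul_sub]
  rw [Finset.sum_range_succ', Finset.sum_range_succ']
  simp only [pow_zero, sub_self, smul_zero, add_zero]
  have h1 : (Nat.factorial 1 : K)⁻¹ • (X ^ 1 - Y ^ 1) = X - Y := by simp
  rw [h1, add_sub_cancel_right]
  apply Sk.sum
  intro k _
  apply Sk.smul
  refine Sk.mono ?_ (pow_sub_pow hX hY hXY (k + 1))
  omega

lemma matexp_zero : matexp (0 : Matrix (Fin n) (Fin n) K) = 1 := by
  cases n with
  | zero => ext i j; exact i.elim0
  | succ m =>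
      rw [matexp, Finset.sum_range_succ']
      have : ∀ k ∈ Finset.range m,
          ((Nat.factorial (k + 1) : K))⁻¹ • (0 : Matrix (Fin (m+1)) (Fin (m+1)) K) ^ (k + 1) = 0 := by
        intro k _; rw [zero_pow (Nat.succ_ne_zero k), smul_zero]
      rw [Finset.sum_congr rfl this]
      simp

lemma matexp_inj {X Y : Matrix (Fin n) (Fin n) K} (hX : Sk 1 X) (hY : Sk 1 Y)
    (h : matexp X = matexp Y) : X = Y := by
  have key : ∀ m, Sk (m + 1) (X - Y) := by
    intro m
    induction m with
    | zero => simpa using hX.sub hY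
    | succ m ih =>
        have h2 := matexp_sub_matexp hX hY ih
        rw [h, sub_self, zero_sub] at h2
        simpa using h2.neg
  have : Sk n (X - Y) := (key n).mono (by omega)
  have := this.eq_zero
  exact sub_eq_zero.mp this

/-! ### the recursive logarithm -/

noncomputable def logSeq (M : Matrix (Fin n) (Fin n) K) : ℕ → Matrix (Fin n) (Fin n) K
  | 0 => 0
  | k + 1 => logSeq M k + (M - matexp (logSeq M k))

lemma logSeq_spec {M : Matrix (Fin n) (Fin n) K} (hM : Sk 1 (M - 1)) :
    ∀ k, Sk 1 (logSeq M k) ∧ Sk (k + 1) (M - matexp (logSeq M k))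
  | 0 => ⟨Sk.zero 1, by rw [logSeq, matexp_zero]; exact hM⟩
  | k + 1 => by
      obtain ⟨h1, h2⟩ := logSeq_spec hM k
      have hD : logSeq M (k + 1) - logSeq M k = M - matexp (logSeq M k) := by
        rw [logSeq]; abel
      have h1' : Sk 1 (logSeq M (k + 1)) := by
        rw [logSeq]; exact h1.add (h2.mono (by omega))
      refine ⟨h1', ?_⟩
      have key := matexp_sub_matexp h1' h1 (hD ▸ h2)
      rw [hD] at key
      have heq : M - matexp (logSeq M (k + 1)) =
          -(matexp (logSeq M (k + 1)) - matexp (logSeq M k) -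
            (M - matexp (logSeq M k))) := by abel
      rw [heq]
      exact key.neg

lemma matexp_logSeq {M : Matrix (Fin n) (Fin n) K} (hM : Sk 1 (M - 1)) :
    matexp (logSeq M n) = M := by
  have := ((logSeq_spec hM n).2.mono (by omega : n ≤ n + 1)).eq_zero
  have := sub_eq_zero.mp this
  exact this.symm

lemma matexp_sub_one {Z : Matrix (Fin n) (Fin n) K} (hZ : Sk 1 Z) :
    Sk 1 (matexp Z - 1) := by
  have h0 : Sk 1 (Z - 0) := by simpa using hZ
  have key := matexp_sub_matexp hZ (Sk.zero 1) h0
  rw [matexp_zero, sub_zero] at key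
  have heq : matexp Z - 1 = (matexp Z - 1 - Z) + Z := by abel
  rw [heq]
  exact (key.mono (by omega)).add hZ

lemma strictLT_iff {X : Matrix (Fin n) (Fin n) K} : StrictLT X ↔ Sk 1 X := by
  constructor
  · intro h i j hij
    exact h i j (Fin.le_def.mpr (by omega))
  · intro h i j hij
    have := Fin.le_def.mp hij
    exact h i j (by omega)

lemma unip_sub_one {M : Matrix (Fin n) (Fin n) K} (hM : UnipLT M) : Sk 1 (M - 1) := by
  intro i j h
  by_cases hij : i = j
  · subst hij; simp [Matrix.sub_apply, hM.1 i]
  · have hne : (i : ℕ) ≠ (j : ℕ) := fun he => hij (Fin.ext he)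
    have hlt : i < j := Fin.lt_def.mpr (by omega)
    simp [Matrix.sub_apply, hM.2 i j hlt, Matrix.one_apply_ne hij]

/-! ### phiD lemmas -/

variable {Δ : Matrix (Fin n) (Fin n) K}

lemma phiD_add (A B : Matrix (Fin n) (Fin n) K) :
    phiD Δ (A + B) = phiD Δ A + phiD Δ B := by
  simp [phiD, Matrix.transpose_add, Matrix.mul_add, Matrix.add_mul]

lemma phiD_sub (A B : Matrix (Fin n) (Fin n) K) :
    phiD Δ (A - B) = phiD Δ A - phiD Δ B := by
  simp [phiD, Matrix.transpose_sub, Matrix.mul_sub, Matrix.sub_mul]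

lemma phiD_smul (c : K) (A : Matrix (Fin n) (Fin n) K) :
    phiD Δ (c • A) = c • phiD Δ A := by
  simp [phiD, Matrix.transpose_smul, Matrix.mul_smul, Matrix.smul_mul]

lemma phiD_zero : phiD Δ (0 : Matrix (Fin n) (Fin n) K) = 0 := by
  simp [phiD]

lemma phiD_one (hdet : IsUnit Δ.det) : phiD Δ (1 : Matrix (Fin n) (Fin n) K) = 1 := by
  simp [phiD, Matrix.mul_nonsing_inv Δ hdet]

lemma phiD_mul (hdet : IsUnit Δ.det) (A B : Matrix (Fin n) (Fin n) K) :
    phiD Δ (A * B) = phiD Δ B * phiD Δ A := by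
  simp only [phiD, Matrix.transpose_mul, Matrix.mul_assoc,
    Matrix.nonsing_inv_mul_cancel_left _ _ hdet]

lemma phiD_pow (hdet : IsUnit Δ.det) (A : Matrix (Fin n) (Fin n) K) (k : ℕ) :
    phiD Δ (A ^ k) = phiD Δ A ^ k := by
  induction k with
  | zero => simpa [pow_zero] using phiD_one hdet
  | succ k ih => rw [pow_succ, phiD_mul hdet, ih, ← pow_succ']

lemma phiD_sum {ι : Type*} (s : Finset ι) (f : ι → Matrix (Fin n) (Fin n) K) :
    phiD Δ (∑ k ∈ s, f k) = ∑ k ∈ s, phiD Δ (f k) := by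
  simp [phiD, Matrix.transpose_sum, Finset.mul_sum, Finset.sum_mul]

lemma phiD_matexp (hdet : IsUnit Δ.det) (X : Matrix (Fin n) (Fin n) K) :
    phiD Δ (matexp X) = matexp (phiD Δ X) := by
  rw [matexp, matexp, phiD_sum]
  refine Finset.sum_congr rfl fun k _ => ?_
  rw [phiD_smul, phiD_pow hdet]

lemma phiD_logSeq (hdet : IsUnit Δ.det) (M : Matrix (Fin n) (Fin n) K) :
    ∀ k, phiD Δ (logSeq M k) = logSeq (phiD Δ M) k
  | 0 => by rw [logSeq, logSeq]; exact phiD_zero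
  | k + 1 => by
      rw [logSeq, logSeq, phiD_add, phiD_sub, phiD_matexp hdet, phiD_logSeq hdet M k]

/-! ### exp X * exp (-X) = 1 -/

lemma alt_choose_sum [CharZero K] (m : ℕ) :
    (∑ k ∈ Finset.range (m + 1), ((-1 : K)) ^ (m - k) * (m.choose k : K))
      = if m = 0 then 1 else 0 := by
  have hrefl : (∑ k ∈ Finset.range (m + 1), ((-1 : K)) ^ (m - k) * (m.choose k : K))
      = ∑ k ∈ Finset.range (m + 1), ((-1 : K)) ^ k * (m.choose k : K) := by
    rw [← Finset.sum_range_reflect]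
    refine Finset.sum_congr rfl fun j hj => ?_
    have hj' : j ≤ m := by simpa [Nat.lt_succ_iff] using hj
    rw [show m + 1 - 1 - j = m - j by omega, Nat.sub_sub_self hj', Nat.choose_symm hj']
  rw [hrefl]
  have h := Int.alternating_sum_range_choose (n := m)
  have hcast : ((∑ i ∈ Finset.range (m + 1), (-1 : ℤ) ^ i * (m.choose i : ℤ) : ℤ) : K)
      = ∑ k ∈ Finset.range (m + 1), ((-1 : K)) ^ k * (m.choose k : K) := by
    push_cast
    rfl
  rw [← hcast, h]
  split_ifs <;> norm_num

lemma scalar_sum [CharZero K] (m : ℕ) :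
    (∑ k ∈ Finset.range (m + 1),
        ((Nat.factorial k : K))⁻¹ * ((-1 : K) ^ (m - k) * ((Nat.factorial (m - k) : K))⁻¹))
      = if m = 0 then 1 else 0 := by
  have hfac : ∀ j : ℕ, ((Nat.factorial j : K)) ≠ 0 :=
    fun j => Nat.cast_ne_zero.2 (Nat.factorial_ne_zero j)
  have key : ∀ k ∈ Finset.range (m + 1),
      ((Nat.factorial k : K))⁻¹ * ((-1 : K) ^ (m - k) * ((Nat.factorial (m - k) : K))⁻¹)
        = ((-1 : K) ^ (m - k) * (m.choose k : K)) / (Nat.factorial m : K) := by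
    intro k hk
    have hk' : k ≤ m := by simpa [Nat.lt_succ_iff] using hk
    rw [Nat.cast_choose K hk', eq_div_iff (hfac m)]
    field_simp
  rw [Finset.sum_congr rfl key, ← Finset.sum_div, alt_choose_sum]
  split_ifs with h
  · subst h; simp
  · simp

lemma matexp_mul_matexp_neg [CharZero K] {X : Matrix (Fin n) (Fin n) K} (hX : Sk 1 X) :
    matexp X * matexp (-X) = 1 := by
  rcases Nat.eq_zero_or_pos n with hn | hn
  · subst hn; ext i j; exact i.elim0
  rw [matexp, matexp, Finset.sum_mul_sum]
  have hterm : ∀ k l : ℕ,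
      (((Nat.factorial k : K))⁻¹ • X ^ k) * (((Nat.factorial l : K))⁻¹ • (-X) ^ l)
        = (((Nat.factorial k : K))⁻¹ * ((-1 : K) ^ l * ((Nat.factorial l : K))⁻¹))
            • X ^ (k + l) := by
    intro k l
    have hneg : (-X) = (-1 : K) • X := by simp
    rw [hneg, smul_pow, smul_smul, smul_mul_smul_comm, ← pow_add]
    ring_nf
  simp only [hterm]
  rw [← Finset.sum_product']
  set g : ℕ × ℕ → Matrix (Fin n) (Fin n) K := fun p =>
    (((Nat.factorial p.1 : K))⁻¹ * ((-1 : K) ^ p.2 * ((Nat.factorial p.2 : K))⁻¹))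
      • X ^ (p.1 + p.2) with hg
  have hzero : ∀ p : ℕ × ℕ, n ≤ p.1 + p.2 → g p = 0 := by
    intro p hp
    rw [hg]
    simp only
    rw [pow_eq_zero_of_le hX hp, smul_zero]
  have hfilter : ∑ p ∈ Finset.range n ×ˢ Finset.range n, g p
      = ∑ p ∈ (Finset.range n ×ˢ Finset.range n).filter (fun p => p.1 + p.2 < n), g p := by
    symm
    apply Finset.sum_filter_of_ne
    intro p _ hgp
    by_contra hc
    exact hgp (hzero p (by omega))
  have hset : (Finset.range n ×ˢ Finset.range n).filter (fun p => p.1 + p.2 < n)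
      = (Finset.range n).biUnion (fun m => Finset.HasAntidiagonal.antidiagonal m) := by
    ext p
    simp only [Finset.mem_filter, Finset.mem_product, Finset.mem_range, Finset.mem_biUnion,
      Finset.HasAntidiagonal.mem_antidiagonal]
    constructor
    · rintro ⟨⟨h1, h2⟩, h3⟩; exact ⟨p.1 + p.2, h3, rfl⟩
    · rintro ⟨m, hm, rfl⟩; omega
  have hdisj : (↑(Finset.range n) : Set ℕ).PairwiseDisjoint
      (fun m => (Finset.HasAntidiagonal.antidiagonal m : Finset (ℕ × ℕ))) := by
    intro a _ b _ hab
    refine Finset.disjoint_left.mpr ?_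
    intro p hp hq
    rw [Finset.HasAntidiagonal.mem_antidiagonal] at hp hq
    exact hab (hp.symm.trans hq)
  rw [hfilter, hset, Finset.sum_biUnion hdisj]
  have hinner : ∀ m ∈ Finset.range n, ∑ p ∈ Finset.HasAntidiagonal.antidiagonal m, g p
      = (if m = 0 then (1 : K) else 0) • X ^ m := by
    intro m _
    rw [Finset.Nat.sum_antidiagonal_eq_sum_range_succ_mk]
    have : ∀ k ∈ Finset.range (m + 1), g (k, m - k)
        = (((Nat.factorial k : K))⁻¹ * ((-1 : K) ^ (m - k) * ((Nat.factorial (m - k) : K))⁻¹))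
            • X ^ m := by
      intro k hk
      have hk' : k ≤ m := by simpa [Nat.lt_succ_iff] using hk
      rw [hg]
      simp only
      rw [show k + (m - k) = m by omega]
    rw [Finset.sum_congr rfl this, ← Finset.sum_smul, scalar_sum]
  rw [Finset.sum_congr rfl hinner]
  rw [Finset.sum_eq_single 0]
  · simp
  · intro m _ hm; rw [if_neg hm, zero_smul]
  · intro h; exact absurd (Finset.mem_range.mpr hn) h

lemma matexp_inv [CharZero K] {X : Matrix (Fin n) (Fin n) K} (hX : Sk 1 X) :
    (matexp X)⁻¹ = matexp (-X) :=
  Matrix.inv_eq_right_inv (matexp_mul_matexp_neg hX)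

end MatexpAux

open MatexpAux in
/-- exp maps NT^{Δ+} into ST^Δ and NT^{Δ-} into OT^Δ, bijectively. -/
theorem matexp_eigenspaces {n : ℕ} {K : Type*} [Field K] [CharZero K]
    (Δ : Matrix (Fin n) (Fin n) K) (hdet : IsUnit Δ.det)
    (hsym : Δᵀ = Δ ∨ Δᵀ = -Δ) :
    (∀ X : Matrix (Fin n) (Fin n) K, StrictLT X → phiD Δ X = X →
        phiD Δ (matexp X) = matexp X) ∧
    (∀ X : Matrix (Fin n) (Fin n) K, StrictLT X → phiD Δ X = -X →
        phiD Δ (matexp X) = (matexp X)⁻¹) ∧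
    (∀ M : Matrix (Fin n) (Fin n) K, UnipLT M → phiD Δ M = M →
        ∃! X : Matrix (Fin n) (Fin n) K, StrictLT X ∧ phiD Δ X = X ∧ matexp X = M) ∧
    (∀ M : Matrix (Fin n) (Fin n) K, UnipLT M → phiD Δ M = M⁻¹ →
        ∃! X : Matrix (Fin n) (Fin n) K, StrictLT X ∧ phiD Δ X = -X ∧ matexp X = M) := by
  refine ⟨?_, ?_, ?_, ?_⟩
  · intro X _ hphi
    rw [phiD_matexp hdet, hphi]
  · intro X hX hphi
    rw [phiD_matexp hdet, hphi, matexp_inv (strictLT_iff.mp hX)]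
  · intro M hM hphi
    have hM1 := unip_sub_one hM
    have hXs : Sk 1 (logSeq M n) := (logSeq_spec hM1 n).1
    have hexp := matexp_logSeq hM1
    refine ⟨logSeq M n, ⟨strictLT_iff.mpr hXs, ?_, hexp⟩, ?_⟩
    · rw [phiD_logSeq hdet M n, hphi]
    · rintro Y ⟨hY1, _, hY3⟩
      exact matexp_inj (strictLT_iff.mp hY1) hXs (hY3.trans hexp.symm)
  · intro M hM hphi
    have hM1 := unip_sub_one hM
    have hXs : Sk 1 (logSeq M n) := (logSeq_spec hM1 n).1
    have hexp : matexp (logSeq M n) = M := matexp_logSeq hM1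
    have hMinv : M⁻¹ = matexp (-(logSeq M n)) := by
      conv_lhs => rw [← hexp]
      exact matexp_inv hXs
    have hMinv1 : Sk 1 (M⁻¹ - 1) := by
      rw [hMinv]; exact matexp_sub_one hXs.neg
    have hYs : Sk 1 (logSeq M⁻¹ n) := (logSeq_spec hMinv1 n).1
    have hexpY : matexp (logSeq M⁻¹ n) = M⁻¹ := matexp_logSeq hMinv1
    have hYX : logSeq M⁻¹ n = -(logSeq M n) :=
      matexp_inj hYs hXs.neg (by rw [hexpY, hMinv])
    refine ⟨logSeq M n, ⟨strictLT_iff.mpr hXs, ?_, hexp⟩, ?_⟩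
    · rw [phiD_logSeq hdet M n, hphi, hYX]
    · rintro Y ⟨hY1, _, hY3⟩
      exact matexp_inj (strictLT_iff.mp hY1) hXs (hY3.trans hexp.symm)
end

section
/- Let O ∈ OT^Δ and M ∈ ST^Δ. Then the product O·M lies in ST^Δ if and only if O = 1. -/
open Matrix

lemma UnipLT.det_eq_one {n : ℕ} {K : Type*} [Field K] {M : Matrix (Fin n) (Fin n) K}
    (h : UnipLT M) : M.det = 1 := by
  rw [Matrix.det_of_lowerTriangular M (fun i j hij => h.2 i j hij)]
  simp [h.1]

lemma unipLT_sq_inj {n : ℕ} {K : Type*} [Field K] [CharZero K]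
    {A B : Matrix (Fin n) (Fin n) K} (hA : UnipLT A) (hB : UnipLT B)
    (hAB : A * A = B * B) : A = B := by
  suffices h : ∀ d : ℕ, ∀ i j : Fin n, (i : ℕ) - j ≤ d → A i j = B i j by
    ext i j; exact h n i j (Nat.le_of_lt_succ (Nat.lt_succ_of_le (Nat.sub_le_of_le_add (by omega))))
  intro d
  induction d with
  | zero =>
    intro i j hij
    rcases lt_trichotomy i j with h | h | h
    · rw [hA.2 i j h, hB.2 i j h]
    · subst h; rw [hA.1, hB.1]
    · exfalso; have : (j : ℕ) < i := h; omega
  | succ d ih =>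
    intro i j hij
    rcases lt_trichotomy i j with h | h | h
    · rw [hA.2 i j h, hB.2 i j h]
    · subst h; rw [hA.1, hB.1]
    · -- j < i
      have hne : i ≠ j := ne_of_gt h
      have key : (A * A) i j = (B * B) i j := by rw [hAB]
      rw [Matrix.mul_apply, Matrix.mul_apply] at key
      have hsum : ∀ k : Fin n, A i k * A k j - B i k * B k j =
          (if k = i then A i j - B i j else 0) + (if k = j then A i j - B i j else 0) := by
        intro k
        rcases eq_or_ne k i with rfl | hki
        · simp [hA.1, hB.1, if_neg hne]
        rcases eq_or_ne k j with rfl | hkj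
        · simp [hA.1, hB.1, hne, hki]
        rcases lt_or_ge k j with hkj' | hkj'
        · rw [hA.2 k j hkj', hB.2 k j hkj']; simp [hki, hkj]
        rcases lt_or_ge i k with hik | hik
        · rw [hA.2 i k hik, hB.2 i k hik]; simp [hki, hkj]
        -- j < k < i
        have hk1 : (i : ℕ) - k ≤ d := by
          have : (k : ℕ) < i := lt_of_le_of_ne hik (fun e => hki (Fin.ext e))
          have : (j : ℕ) < k := lt_of_le_of_ne hkj' (fun e => hkj (Fin.ext e.symm))
          omega
        have hk2 : (k : ℕ) - j ≤ d := by
          have : (k : ℕ) < i := lt_of_le_of_ne hik (fun e => hki (Fin.ext e))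
          omega
        rw [ih i k hk1, ih k j hk2]
        simp [hki, hkj]
      have hzero : (2 : K) * (A i j - B i j) = 0 := by
        have := sub_eq_zero_of_eq key
        rw [← Finset.sum_sub_distrib] at this
        calc (2 : K) * (A i j - B i j)
            = ∑ k : Fin n, ((if k = i then A i j - B i j else 0)
              + (if k = j then A i j - B i j else 0)) := by
              rw [Finset.sum_add_distrib, Finset.sum_ite_eq' Finset.univ i,
                Finset.sum_ite_eq' Finset.univ j]
              simp; ring
          _ = 0 := by rw [← Finset.sum_congr rfl (fun k _ => hsum k)]; exact this
      have := mul_eq_zero.mp hzero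
      rcases this with h2 | h2
      · exact absurd h2 two_ne_zero
      · exact sub_eq_zero.mp h2

/-- for O ∈ OT^Δ and M ∈ ST^Δ, O·M ∈ ST^Δ iff O = 1. -/
theorem OTD_mul_STD_mem_STD_iff {n : ℕ} {K : Type*} [Field K] [CharZero K]
    (Δ : Matrix (Fin n) (Fin n) K) (hdet : IsUnit Δ.det)
    (hsym : Δᵀ = Δ ∨ Δᵀ = -Δ)
    (O M : Matrix (Fin n) (Fin n) K)
    (hO : UnipLT O) (hOorth : phiD Δ O = O⁻¹)
    (hM : UnipLT M) (hMsym : phiD Δ M = M) :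
    (UnipLT (O * M) ∧ phiD Δ (O * M) = O * M) ↔ O = 1 := by
  have hDinv : Δ⁻¹ * Δ = 1 := Matrix.nonsing_inv_mul Δ hdet
  have hOdet : IsUnit O.det := by rw [hO.det_eq_one]; exact isUnit_one
  have hMdet : IsUnit M.det := by rw [hM.det_eq_one]; exact isUnit_one
  constructor
  · rintro ⟨hUL, hS⟩
    have hanti : phiD Δ (O * M) = phiD Δ M * phiD Δ O := by
      unfold phiD
      rw [Matrix.transpose_mul]
      simp only [Matrix.mul_assoc]
      rw [← Matrix.mul_assoc Δ⁻¹ Δ, hDinv, Matrix.one_mul]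
    rw [hMsym, hOorth] at hanti
    have heq : O * M = M * O⁻¹ := by rw [← hS, hanti]
    have hsq : (O * M) * (O * M) = M * M := by
      nth_rewrite 1 [heq]
      rw [Matrix.mul_assoc M, ← Matrix.mul_assoc O⁻¹ O M,
        Matrix.nonsing_inv_mul O hOdet, Matrix.one_mul]
    have : O * M = M := unipLT_sq_inj hUL hM hsq
    calc O = O * M * M⁻¹ := by
          rw [Matrix.mul_assoc, Matrix.mul_nonsing_inv M hMdet, Matrix.mul_one]
      _ = M * M⁻¹ := by rw [this]
      _ = 1 := Matrix.mul_nonsing_inv M hMdet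
  · rintro rfl
    rw [Matrix.one_mul]
    exact ⟨hM, hMsym⟩
end

section
/- The map f : OT^Δ × NT^{Δ+} → UT^Δ defined by f(O, N) = O·exp(N) is a bijection. Equivalently, every U ∈ UT^Δ admits a unique factorization U = O·R with O ∈ OT^Δ Δ-orthogonal and R ∈ ST^Δ Δ-symmetric. -/
open Matrix

namespace ORfact

variable {n : ℕ} {K : Type*} [Field K]

/-- `M i j = 0` whenever `i < j + m` : "strictly lower triangular of depth `m`". -/
def LowB (m : ℕ) (M : Matrix (Fin n) (Fin n) K) : Prop :=
  ∀ i j : Fin n, (i : ℕ) < (j : ℕ) + m → M i j = 0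

lemma LowB.mono {a b : ℕ} (h : a ≤ b) {M : Matrix (Fin n) (Fin n) K}
    (hM : LowB b M) : LowB a M :=
  fun i j hij => hM i j (by omega)

lemma LowB.add {a : ℕ} {M N : Matrix (Fin n) (Fin n) K}
    (hM : LowB a M) (hN : LowB a N) : LowB a (M + N) := fun i j h => by
  simp [Matrix.add_apply, hM i j h, hN i j h]

lemma LowB.neg {a : ℕ} {M : Matrix (Fin n) (Fin n) K}
    (hM : LowB a M) : LowB a (-M) := fun i j h => by
  simp [Matrix.neg_apply, hM i j h]

lemma LowB.sub {a : ℕ} {M N : Matrix (Fin n) (Fin n) K}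
    (hM : LowB a M) (hN : LowB a N) : LowB a (M - N) := by
  rw [sub_eq_add_neg]; exact hM.add hN.neg

lemma LowB.smul {a : ℕ} (c : K) {M : Matrix (Fin n) (Fin n) K}
    (hM : LowB a M) : LowB a (c • M) := fun i j h => by
  simp [Matrix.smul_apply, hM i j h]

lemma LowB.mul {a b : ℕ} {M N : Matrix (Fin n) (Fin n) K}
    (hM : LowB a M) (hN : LowB b N) : LowB (a + b) (M * N) := by
  intro i j h
  rw [Matrix.mul_apply]
  apply Finset.sum_eq_zero
  intro k _
  by_cases hk : (i : ℕ) < (k : ℕ) + a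
  · rw [hM i k hk, zero_mul]
  · rw [hN k j (by omega), mul_zero]

lemma LowB.pow {M : Matrix (Fin n) (Fin n) K} (hM : LowB 1 M) :
    ∀ k, LowB k (M ^ k)
  | 0 => by
      intro i j h
      rw [pow_zero]
      exact Matrix.one_apply_ne (fun e => by rw [e] at h; omega)
  | k + 1 => by
      rw [pow_succ]
      exact (hM.pow k).mul hM

lemma LowB.eq_zero {m : ℕ} (h : n ≤ m) {M : Matrix (Fin n) (Fin n) K}
    (hM : LowB m M) : M = 0 := by
  ext i j
  have := i.isLt
  exact hM i j (by omega)

lemma unipLT_iff_lowB {M : Matrix (Fin n) (Fin n) K} :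
    UnipLT M ↔ LowB 1 (M - 1) := by
  constructor
  · rintro ⟨h1, h2⟩ i j hij
    rcases eq_or_lt_of_le (by omega : (i : ℕ) ≤ (j : ℕ)) with he | hlt
    · have : i = j := Fin.ext he
      subst this
      simp [Matrix.sub_apply, h1 i]
    · have hij' : i < j := hlt
      simp [Matrix.sub_apply, h2 i j hij', Matrix.one_apply_ne (Fin.ne_of_lt hij')]
  · intro h
    constructor
    · intro i
      have := h i i (by omega)
      simpa [Matrix.sub_apply] using sub_eq_zero.mp this
    · intro i j hij
      have := h i j (by omega)
      have h1 : (1 : Matrix (Fin n) (Fin n) K) i j = 0 :=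
        Matrix.one_apply_ne (Fin.ne_of_lt hij)
      simpa [Matrix.sub_apply, h1] using sub_eq_zero.mp this

lemma unip_mul {A B : Matrix (Fin n) (Fin n) K}
    (hA : UnipLT A) (hB : UnipLT B) : UnipLT (A * B) := by
  obtain ⟨hA1, hA2⟩ := hA
  obtain ⟨hB1, hB2⟩ := hB
  constructor
  · intro i
    rw [Matrix.mul_apply, Finset.sum_eq_single i]
    · rw [hA1, hB1, one_mul]
    · intro k _ hk
      rcases lt_or_gt_of_ne hk with hlt | hgt
      · rw [hB2 k i hlt, mul_zero]
      · rw [hA2 i k hgt, zero_mul]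
    · intro h; exact absurd (Finset.mem_univ i) h
  · intro i j hij
    rw [Matrix.mul_apply]
    apply Finset.sum_eq_zero
    intro k _
    by_cases hk : i < k
    · rw [hA2 i k hk, zero_mul]
    · have : k < j := lt_of_le_of_lt (not_lt.mp hk) hij
      rw [hB2 k j this, mul_zero]

lemma unip_det {M : Matrix (Fin n) (Fin n) K} (h : UnipLT M) :
    M.det = 1 := by
  rw [Matrix.det_of_lowerTriangular M (fun i j hij => h.2 i j hij)]
  simp [h.1]

lemma unip_isUnit_det {M : Matrix (Fin n) (Fin n) K} (h : UnipLT M) :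
    IsUnit M.det := by
  rw [unip_det h]; exact isUnit_one

section phi

variable (Δ : Matrix (Fin n) (Fin n) K)

lemma phi_mul (hdet : IsUnit Δ.det) (A B : Matrix (Fin n) (Fin n) K) :
    phiD Δ (A * B) = phiD Δ B * phiD Δ A := by
  simp only [phiD, Matrix.transpose_mul, Matrix.mul_assoc]
  rw [← Matrix.mul_assoc Δ⁻¹ Δ, Matrix.nonsing_inv_mul Δ hdet, Matrix.one_mul]

lemma phi_one (hdet : IsUnit Δ.det) : phiD Δ 1 = 1 := by
  simp [phiD, Matrix.mul_nonsing_inv Δ hdet]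

lemma phi_add (A B : Matrix (Fin n) (Fin n) K) :
    phiD Δ (A + B) = phiD Δ A + phiD Δ B := by
  simp [phiD, Matrix.transpose_add, Matrix.mul_add, Matrix.add_mul]

lemma phi_sub (A B : Matrix (Fin n) (Fin n) K) :
    phiD Δ (A - B) = phiD Δ A - phiD Δ B := by
  simp [phiD, Matrix.transpose_sub, Matrix.mul_sub, Matrix.sub_mul]

lemma phi_smul (c : K) (A : Matrix (Fin n) (Fin n) K) :
    phiD Δ (c • A) = c • phiD Δ A := by
  simp [phiD, Matrix.transpose_smul, Matrix.mul_smul, Matrix.smul_mul]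

lemma phi_phi (hdet : IsUnit Δ.det) (hsym : Δᵀ = Δ ∨ Δᵀ = -Δ)
    (M : Matrix (Fin n) (Fin n) K) : phiD Δ (phiD Δ M) = M := by
  have hRt : Δ * Δ⁻¹ = 1 := Matrix.mul_nonsing_inv Δ hdet
  have hT : (Δ⁻¹)ᵀ * M * Δᵀ = Δ⁻¹ * M * Δ := by
    rcases hsym with h | h
    · rw [Matrix.transpose_nonsing_inv, h]
    · have hneg : (-Δ)⁻¹ = -Δ⁻¹ := by
        apply Matrix.inv_eq_right_inv
        rw [neg_mul_neg, hRt]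
      rw [Matrix.transpose_nonsing_inv, h, hneg]
      simp only [Matrix.neg_mul, Matrix.mul_neg, neg_neg]
  simp only [phiD, Matrix.transpose_mul, Matrix.transpose_transpose]
  rw [show Δ * ((Δ⁻¹)ᵀ * (M * Δᵀ)) * Δ⁻¹ = Δ * ((Δ⁻¹)ᵀ * M * Δᵀ) * Δ⁻¹ from by
    simp only [Matrix.mul_assoc], hT]
  rw [show Δ * (Δ⁻¹ * M * Δ) * Δ⁻¹ = (Δ * Δ⁻¹) * M * (Δ * Δ⁻¹) from by
    simp only [Matrix.mul_assoc], hRt, Matrix.one_mul, Matrix.mul_one]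

end phi

/-- Newton-type iteration converging to the square root of a unipotent matrix. -/
noncomputable def sqrtSeq (S : Matrix (Fin n) (Fin n) K) : ℕ → Matrix (Fin n) (Fin n) K
  | 0 => 1
  | m + 1 => sqrtSeq S m + (2⁻¹ : K) • (S - sqrtSeq S m * sqrtSeq S m)

lemma sqrtSeq_spec [CharZero K] {S : Matrix (Fin n) (Fin n) K} (hS : LowB 1 (S - 1)) :
    ∀ m, LowB 1 (sqrtSeq S m - 1) ∧ LowB (m + 1) (S - sqrtSeq S m * sqrtSeq S m) := by
  have h2 : (2⁻¹ : K) + 2⁻¹ = 1 := by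
    rw [← two_mul]
    exact mul_inv_cancel₀ (two_ne_zero)
  intro m
  induction m with
  | zero =>
    constructor
    · intro i j _
      simp [sqrtSeq]
    · simpa [sqrtSeq] using hS
  | succ m ih =>
    obtain ⟨hR, hE⟩ := ih
    set R := sqrtSeq S m with hRdef
    set E := S - R * R with hEdef
    set H : Matrix (Fin n) (Fin n) K := (2⁻¹ : K) • E with hHdef
    have hHE : H + H = E := by
      rw [hHdef, ← add_smul, h2, one_smul]
    have hSeq : S = R * R + (H + H) := by
      rw [hHE, hEdef]; abel
    have hH : LowB (m + 1) H := LowB.smul _ hE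
    have hstep : sqrtSeq S (m + 1) = R + H := by
      simp [sqrtSeq, ← hRdef, ← hEdef, ← hHdef]
    constructor
    · rw [hstep, show R + H - 1 = (R - 1) + H from by abel]
      exact hR.add (hH.mono (by omega))
    · rw [hstep]
      have key : S - (R + H) * (R + H)
          = -((R - 1) * H + H * (R - 1) + H * H) := by
        rw [hSeq]; noncomm_ring
      rw [key]
      have t1 : LowB (m + 2) ((R - 1) * H) := (hR.mul hH).mono (by omega)
      have t2 : LowB (m + 2) (H * (R - 1)) := (hH.mul hR).mono (by omega)
      have t3 : LowB (m + 2) (H * H) := (hH.mul hH).mono (by omega)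
      exact ((t1.add t2).add t3).neg


lemma sqrtSeq_phi (Δ : Matrix (Fin n) (Fin n) K) (hdet : IsUnit Δ.det)
    {S : Matrix (Fin n) (Fin n) K} (hφS : phiD Δ S = S) :
    ∀ m, phiD Δ (sqrtSeq S m) = sqrtSeq S m
  | 0 => phi_one Δ hdet
  | m + 1 => by
    have ih := sqrtSeq_phi Δ hdet hφS m
    simp only [sqrtSeq, phi_add Δ, phi_smul Δ, phi_sub Δ,
      phi_mul Δ hdet, hφS, ih]

/-- Uniqueness of unipotent lower-triangular square roots. -/
lemma sqrt_unique [CharZero K] {R₁ R₂ : Matrix (Fin n) (Fin n) K}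
    (h1 : UnipLT R₁) (h2 : UnipLT R₂) (hsq : R₁ * R₁ = R₂ * R₂) : R₁ = R₂ := by
  set D := R₁ - R₂ with hD
  have key : ∀ m, LowB (m + 1) D := by
    intro m
    induction m with
    | zero =>
      rw [show D = (R₁ - 1) - (R₂ - 1) from by rw [hD]; abel]
      exact (unipLT_iff_lowB.mp h1).sub (unipLT_iff_lowB.mp h2)
    | succ m ih =>
      have hz : R₁ * D + D * R₂ = 0 := by
        have : R₁ * D + D * R₂ = R₁ * R₁ - R₂ * R₂ := by rw [hD]; noncomm_ring
        rw [this, hsq, sub_self]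
      have hid : D + D = -((R₁ - 1) * D + D * (R₂ - 1)) + (R₁ * D + D * R₂) := by
        noncomm_ring
      rw [hz, add_zero] at hid
      have t1 : LowB (m + 2) ((R₁ - 1) * D) :=
        ((unipLT_iff_lowB.mp h1).mul ih).mono (by omega)
      have t2 : LowB (m + 2) (D * (R₂ - 1)) :=
        (ih.mul (unipLT_iff_lowB.mp h2)).mono (by omega)
      have hDD : LowB (m + 2) (D + D) := hid ▸ (t1.add t2).neg
      intro i j hij
      have := hDD i j hij
      rw [Matrix.add_apply] at this
      have h2' : (2 : K) * D i j = 0 := by rw [two_mul]; exact this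
      rcases mul_eq_zero.mp h2' with h | h
      · exact absurd h two_ne_zero
      · exact h
  have : D = 0 := (key n).eq_zero (by omega)
  have := sub_eq_zero.mp (hD ▸ this)
  exact this

/-- A unipotent lower-triangular matrix has a unipotent lower-triangular two-sided
inverse, given by a geometric series. -/
lemma unipLT_inverse {R : Matrix (Fin n) (Fin n) K} (hR : UnipLT R) :
    ∃ Ri : Matrix (Fin n) (Fin n) K, UnipLT Ri ∧ R * Ri = 1 ∧ Ri * R = 1 := by
  set N := 1 - R with hN
  have hNl : LowB 1 N := by
    have := (unipLT_iff_lowB.mp hR).neg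
    simpa [hN, neg_sub] using this
  have hNn : N ^ n = 0 := (hNl.pow n).eq_zero le_rfl
  set G : Matrix (Fin n) (Fin n) K := ∑ k ∈ Finset.range n, N ^ k with hG
  have hGR : G * R = 1 := by
    have hgs : G * (N - 1) = N ^ n - 1 := geom_sum_mul N n
    rw [hNn, zero_sub] at hgs
    have hNR : N - 1 = -R := by rw [hN]; abel
    rw [hNR, Matrix.mul_neg] at hgs
    have := neg_injective hgs
    simpa using this
  have hcomm : N * G = G * N := by
    rw [hG, Finset.mul_sum, Finset.sum_mul]
    apply Finset.sum_congr rfl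
    intro k _
    rw [← pow_succ, ← pow_succ']
  have hRG : R * G = 1 := by
    have hRN : R = 1 - N := by rw [hN]; abel
    calc R * G = (1 - N) * G := by rw [← hRN]
      _ = G - N * G := by noncomm_ring
      _ = G - G * N := by rw [hcomm]
      _ = G * (1 - N) := by noncomm_ring
      _ = G * R := by rw [← hRN]
      _ = 1 := hGR
  refine ⟨G, ?_, hRG, hGR⟩
  rw [unipLT_iff_lowB]
  cases n with
  | zero => intro i j _; exact absurd i.isLt (by omega)
  | succ m =>
    have hsum : G = (∑ k ∈ Finset.range m, N ^ (k + 1)) + N ^ 0 :=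
      Finset.sum_range_succ' _ _
    rw [hsum, pow_zero, add_sub_cancel_right]
    intro i j hij
    rw [Matrix.sum_apply]
    apply Finset.sum_eq_zero
    intro k _
    exact (hNl.pow (k + 1)).mono (by omega) i j hij

end ORfact

open ORfact in
/-- every U ∈ UT^Δ admits a unique factorization U = O·R with
O Δ-orthogonal and R Δ-symmetric (both unipotent lower-triangular). -/
theorem UTD_unique_OR_factorization {n : ℕ} {K : Type*} [Field K] [CharZero K]
    (Δ : Matrix (Fin n) (Fin n) K) (hdet : IsUnit Δ.det)
    (hsym : Δᵀ = Δ ∨ Δᵀ = -Δ)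
    (U : Matrix (Fin n) (Fin n) K) (hU : UnipLT U) (hU' : UnipLT (phiD Δ U)) :
    ∃! p : Matrix (Fin n) (Fin n) K × Matrix (Fin n) (Fin n) K,
      (UnipLT p.1 ∧ phiD Δ p.1 = p.1⁻¹) ∧
      (UnipLT p.2 ∧ phiD Δ p.2 = p.2) ∧
      U = p.1 * p.2 := by
  classical
  set S := phiD Δ U * U with hSdef
  have hSuni : UnipLT S := unip_mul hU' hU
  have hφS : phiD Δ S = S := by
    rw [hSdef, phi_mul Δ hdet, phi_phi Δ hdet hsym]
  -- square root R of S
  set R := sqrtSeq S n with hRdef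
  have hspec := sqrtSeq_spec (unipLT_iff_lowB.mp hSuni) n
  have hRuni : UnipLT R := unipLT_iff_lowB.mpr hspec.1
  have hR2 : R * R = S := by
    have : S - R * R = 0 := hspec.2.eq_zero (by omega)
    have := sub_eq_zero.mp this
    exact this.symm
  have hφR : phiD Δ R = R := sqrtSeq_phi Δ hdet hφS n
  -- inverse of R
  obtain ⟨Ri, hRiuni, hRRi, hRiR⟩ := unipLT_inverse hRuni
  have hφRi : phiD Δ Ri = Ri := by
    have h1 : phiD Δ Ri * R = 1 := by
      rw [← hφR, ← phi_mul Δ hdet, hRRi, phi_one Δ hdet]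
    calc phiD Δ Ri = phiD Δ Ri * (R * Ri) := by rw [hRRi, Matrix.mul_one]
      _ = (phiD Δ Ri * R) * Ri := by rw [Matrix.mul_assoc]
      _ = Ri := by rw [h1, Matrix.one_mul]
  set O := U * Ri with hOdef
  have hOuni : UnipLT O := unip_mul hU hRiuni
  have hOO : phiD Δ O * O = 1 := by
    rw [hOdef, phi_mul Δ hdet, hφRi]
    calc Ri * phiD Δ U * (U * Ri) = Ri * (phiD Δ U * U) * Ri := by
          simp only [Matrix.mul_assoc]
      _ = Ri * (R * R) * Ri := by rw [← hSdef, ← hR2]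
      _ = (Ri * R) * (R * Ri) := by simp only [Matrix.mul_assoc]
      _ = 1 := by rw [hRiR, hRRi, Matrix.one_mul]
  have hOinv : phiD Δ O = O⁻¹ := (Matrix.inv_eq_left_inv hOO).symm
  have hUOR : U = O * R := by
    rw [hOdef, Matrix.mul_assoc, hRiR, Matrix.mul_one]
  refine ⟨(O, R), ⟨⟨hOuni, hOinv⟩, ⟨hRuni, hφR⟩, hUOR⟩, ?_⟩
  rintro ⟨O', R'⟩ ⟨⟨hO'uni, hO'inv⟩, ⟨hR'uni, hR'φ⟩, hfac⟩
  dsimp only at hO'uni hO'inv hR'uni hR'φ hfac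
  have hO'det : IsUnit O'.det := unip_isUnit_det hO'uni
  have hR'2 : R' * R' = S := by
    rw [hSdef, hfac, phi_mul Δ hdet, hR'φ, hO'inv]
    rw [show R' * O'⁻¹ * (O' * R') = R' * (O'⁻¹ * O') * R' from by
      simp only [Matrix.mul_assoc], Matrix.nonsing_inv_mul O' hO'det, Matrix.mul_one]
  have hRR' : R' = R := sqrt_unique hR'uni hRuni (hR'2.trans hR2.symm)
  have hOO' : O' = O := by
    have h1 : O' * R = O * R := by rw [← hRR', ← hfac, hUOR, hRR']
    calc O' = O' * (R * Ri) := by rw [hRRi, Matrix.mul_one]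
      _ = (O' * R) * Ri := by rw [Matrix.mul_assoc]
      _ = (O * R) * Ri := by rw [h1]
      _ = O * (R * Ri) := by rw [Matrix.mul_assoc]
      _ = O := by rw [hRRi, Matrix.mul_one]
  rw [Prod.mk.injEq]
  exact ⟨hOO', hRR'⟩
end

section
/- In the decomposition U = O·R with O ∈ OT^Δ and R ∈ ST^Δ, one has R² = φ_Δ(U)·U and O = U·(√(φ_Δ(U)U))⁻¹, where √ denotes the unique unipotent lower-triangular square root. -/
open Matrix

lemma UnipLT.det_isUnit {n : ℕ} {K : Type*} [Field K] {M : Matrix (Fin n) (Fin n) K}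
    (h : UnipLT M) : IsUnit M.det := by
  have : M.det = ∏ i : Fin n, M i i :=
    Matrix.det_of_lowerTriangular M (fun i j hij => h.2 i j hij)
  rw [this]
  simp [h.1]

lemma UnipLT.sq_eq {n : ℕ} {K : Type*} [Field K] [CharZero K]
    {S R : Matrix (Fin n) (Fin n) K} (hS : UnipLT S) (hR : UnipLT R)
    (h : S ^ 2 = R ^ 2) : S = R := by
  have key : ∀ d : ℕ, ∀ i j : Fin n, (i : ℕ) ≤ (j : ℕ) + d → S i j = R i j := by
    intro d
    induction d with
    | zero =>
      intro i j hij
      rcases lt_trichotomy i j with hlt | heq | hgt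
      · rw [hS.2 i j hlt, hR.2 i j hlt]
      · subst heq; rw [hS.1, hR.1]
      · omega
    | succ d ih =>
      intro i j hij
      rcases Nat.lt_or_ge (i : ℕ) ((j : ℕ) + d + 1) with hlt | hge
      · exact ih i j (by omega)
      have hieq : (i : ℕ) = (j : ℕ) + d + 1 := by omega
      have hji : j < i := by
        apply Fin.lt_def.mpr; omega
      have hne : i ≠ j := ne_of_gt hji
      -- entry (i,j) of the squares
      have hsq : (S ^ 2) i j = (R ^ 2) i j := by rw [h]
      have expand : ∀ T : Matrix (Fin n) (Fin n) K, (T ^ 2) i j = ∑ k, T i k * T k j := by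
        intro T; rw [sq, Matrix.mul_apply]
      set g : Fin n → K := fun k => S i k * S k j - R i k * R k j with hg
      have hzero : ∀ k ∈ Finset.univ, k ∉ ({i, j} : Finset (Fin n)) → g k = 0 := by
        intro k _ hk
        simp only [Finset.mem_insert, Finset.mem_singleton, not_or] at hk
        obtain ⟨hki, hkj⟩ := hk
        rcases lt_trichotomy k j with hlt | heq | hgt
        · rw [hg]; simp [hS.2 k j hlt, hR.2 k j hlt]
        · exact absurd heq hkj
        rcases lt_trichotomy i k with hlt | heq | hgt'
        · rw [hg]; simp [hS.2 i k hlt, hR.2 i k hlt]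
        · exact absurd heq.symm hki
        -- j < k < i
        have h1 : S i k = R i k := ih i k (by
          have := Fin.lt_def.mp hgt; omega)
        have h2 : S k j = R k j := ih k j (by
          have := Fin.lt_def.mp hgt'; omega)
        rw [hg]; simp [h1, h2]
      have hsum : ∑ k, g k = 0 := by
        have : ∑ k, g k = (S ^ 2) i j - (R ^ 2) i j := by
          rw [expand S, expand R, ← Finset.sum_sub_distrib]
        rw [this, hsq, sub_self]
      have hpair : ∑ k ∈ ({i, j} : Finset (Fin n)), g k = ∑ k, g k :=
        Finset.sum_subset (Finset.subset_univ _) hzero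
      rw [Finset.sum_pair hne] at hpair
      have : g i + g j = 0 := by rw [hpair, hsum]
      have hgi : g i = S i j - R i j := by
        rw [hg]; simp [hS.1, hR.1]
      have hgj : g j = S i j - R i j := by
        rw [hg]; simp [hS.1 j, hR.1 j]
      rw [hgi, hgj] at this
      have h2 : (2 : K) * (S i j - R i j) = 0 := by linear_combination this
      have h3 : S i j - R i j = 0 := (mul_eq_zero.mp h2).resolve_left two_ne_zero
      exact sub_eq_zero.mp h3
  ext i j
  exact key ((i : ℕ)) i j (by omega)

/-- in the decomposition U = O·R, one has R² = φ_Δ(U)·U and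
O = U·S⁻¹ for the unique unipotent lower-triangular square root S of φ_Δ(U)·U. -/
theorem OR_factorization_formulas {n : ℕ} {K : Type*} [Field K] [CharZero K]
    (Δ : Matrix (Fin n) (Fin n) K) (hdet : IsUnit Δ.det)
    (hsym : Δᵀ = Δ ∨ Δᵀ = -Δ)
    (U O R : Matrix (Fin n) (Fin n) K)
    (hU : UnipLT U) (hU' : UnipLT (phiD Δ U))
    (hO : UnipLT O) (hOorth : phiD Δ O = O⁻¹)
    (hR : UnipLT R) (hRsym : phiD Δ R = R)
    (hfact : U = O * R) :
    R ^ 2 = phiD Δ U * U ∧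
    ∀ S : Matrix (Fin n) (Fin n) K, UnipLT S → S ^ 2 = phiD Δ U * U →
      O = U * S⁻¹ := by
  have hΔinv : Δ⁻¹ * Δ = 1 := Matrix.nonsing_inv_mul Δ hdet
  have hOinv : O⁻¹ * O = 1 := Matrix.nonsing_inv_mul O hO.det_isUnit
  have hRinv : R * R⁻¹ = 1 := Matrix.mul_nonsing_inv R hR.det_isUnit
  have hanti : phiD Δ U = phiD Δ R * phiD Δ O := by
    rw [hfact]
    simp only [phiD, Matrix.transpose_mul]
    have e : Δ * Rᵀ * Δ⁻¹ * (Δ * Oᵀ * Δ⁻¹) = Δ * Rᵀ * ((Δ⁻¹ * Δ) * (Oᵀ * Δ⁻¹)) := by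
      noncomm_ring
    rw [e, hΔinv, Matrix.one_mul]
    noncomm_ring
  have hmain : phiD Δ U * U = R ^ 2 := by
    rw [hanti, hRsym, hOorth, hfact, sq]
    rw [Matrix.mul_assoc R, ← Matrix.mul_assoc O⁻¹, hOinv, Matrix.one_mul]
  refine ⟨hmain.symm, ?_⟩
  intro S hSu hSsq
  have hSR : S = R := hSu.sq_eq hR (by rw [hSsq, hmain])
  rw [hSR, hfact, Matrix.mul_assoc, hRinv, Matrix.mul_one]
end
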